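/- Finite conjunctions of flag-and-check queries can be internalized with only linear size increase while preserving linearity: given FCPs P₁,…,Pₙ of compatible arities with disjoint IDB predicates, each of whose rules contains at most one IDB atom in the body (linear), the program obtained by (i) replacing every rule φ → hit of Pᵢ with i < n by φ → Uᵢ(λ₁), and (ii) adding Uᵢ₋₁(λ₁) to the body of every IDB-free rule of Pᵢ for i > 1, is a linear FCP whose extension over every instance is the intersection of the extensions of P₁,…,Pₙ. -/

import Mathlib

/-- Atoms over EDB predicates `(E, arE)` and IDB predicates `(Idb, arI)`, where terms
are variables (`ℕ`) or special constants `λ₁,…,λ_m` (`Fin m`). -/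
inductive GAtom (E : Type) (arE : E → ℕ) (m : ℕ) (Idb : Type) (arI : Idb → ℕ) where
  | e (p : E) (args : Fin (arE p) → ℕ ⊕ Fin m)
  | i (q : Idb) (args : Fin (arI q) → ℕ ⊕ Fin m)

/-- A Datalog rule with an IDB head. -/
structure GRule (E : Type) (arE : E → ℕ) (m : ℕ) (Idb : Type) (arI : Idb → ℕ) where
  body : List (GAtom E arE m Idb arI)
  headPred : Idb
  headArgs : Fin (arI headPred) → ℕ ⊕ Fin m

/-- Extend an IDB arity function to `Option Idb`, where `none` is the nullary
goal predicate `hit`. -/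
def arO {B : Type} (f : B → ℕ) : Option B → ℕ
  | none => 0
  | some b => f b

/-- Whether an atom is an IDB atom (the goal `hit` counts as an IDB predicate). -/
def GAtom.isIDBb {E : Type} {arE : E → ℕ} {m : ℕ} {Idb : Type} {arI : Idb → ℕ} :
    GAtom E arE m Idb arI → Bool
  | .e _ _ => false
  | .i _ _ => true

/-- Whether an atom is a `hit` atom. -/
def GAtom.isHit {E : Type} {arE : E → ℕ} {m : ℕ} {Idb : Type} {arI : Option Idb → ℕ} :
    GAtom E arE m (Option Idb) arI → Prop
  | .i none _ => True
  | _ => False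

/-- An IDB fact over domain `D`. -/
def GFact (Idb : Type) (arI : Idb → ℕ) (D : Type) := Σ q : Idb, Fin (arI q) → D

/-- Satisfaction of an atom in the database `I` together with IDB facts `T`, under a
valuation `σ` of the variables, with special constants interpreted by `δ`. -/
def GAtom.holds {E : Type} {arE : E → ℕ} {m : ℕ} {Idb : Type} {arI : Idb → ℕ}
    {D : Type} (I : ∀ p : E, Set (Fin (arE p) → D)) (T : Set (GFact Idb arI D))
    (σ : ℕ → D) (δ : Fin m → D) : GAtom E arE m Idb arI → Prop
  | .e p args => (fun j => Sum.elim σ δ (args j)) ∈ I p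
  | .i q args => (⟨q, fun j => Sum.elim σ δ (args j)⟩ : GFact Idb arI D) ∈ T

/-- The immediate-consequence operator of program `P` over `I` with `λᵢ ↦ δᵢ`. -/
def gstep {E : Type} {arE : E → ℕ} {m : ℕ} {Idb : Type} {arI : Idb → ℕ} {D : Type}
    (P : List (GRule E arE m Idb arI)) (I : ∀ p : E, Set (Fin (arE p) → D))
    (δ : Fin m → D) (T : Set (GFact Idb arI D)) : Set (GFact Idb arI D) :=
  { f | ∃ r ∈ P, ∃ σ : ℕ → D, (∀ a ∈ r.body, a.holds I T σ δ) ∧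
        f = ⟨r.headPred, fun j => Sum.elim σ δ (r.headArgs j)⟩ }

/-- The least fixpoint of the immediate-consequence operator. -/
def glfp {E : Type} {arE : E → ℕ} {m : ℕ} {Idb : Type} {arI : Idb → ℕ} {D : Type}
    (P : List (GRule E arE m Idb arI)) (I : ∀ p : E, Set (Fin (arE p) → D))
    (δ : Fin m → D) : Set (GFact Idb arI D) :=
  ⋂₀ { T | gstep P I δ T ⊆ T }

/-- `δ̄` is in the extension of the FCP `P` over `I`: the least fixpoint derives `hit`
(equivalently, every model expansion entails `hit`). -/
def fcpExt {E : Type} {arE : E → ℕ} {m : ℕ} {Idb : Type} {arI : Idb → ℕ} {D : Type}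
    (P : List (GRule E arE m (Option Idb) (arO arI)))
    (I : ∀ p : E, Set (Fin (arE p) → D)) (δ : Fin m → D) : Prop :=
  ∃ f, (⟨none, f⟩ : GFact (Option Idb) (arO arI) D) ∈ glfp P I δ


theorem gholds_mono {E : Type} {arE : E → ℕ} {m : ℕ} {Idb : Type} {arI : Idb → ℕ} {D : Type}
    {I : ∀ p : E, Set (Fin (arE p) → D)} {T T' : Set (GFact Idb arI D)} (h : T ⊆ T')
    {σ : ℕ → D} {δ : Fin m → D} {a : GAtom E arE m Idb arI}
    (ha : a.holds I T σ δ) : a.holds I T' σ δ := by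
  cases a with
  | e p args => exact ha
  | i q args => exact h ha

theorem gstep_mono {E : Type} {arE : E → ℕ} {m : ℕ} {Idb : Type} {arI : Idb → ℕ} {D : Type}
    (P : List (GRule E arE m Idb arI)) (I : ∀ p : E, Set (Fin (arE p) → D))
    (δ : Fin m → D) {T T' : Set (GFact Idb arI D)} (h : T ⊆ T') :
    gstep P I δ T ⊆ gstep P I δ T' := by
  rintro f ⟨r, hr, σ, hbody, rfl⟩
  exact ⟨r, hr, σ, fun a ha => gholds_mono h (hbody a ha), rfl⟩

theorem glfp_least {E : Type} {arE : E → ℕ} {m : ℕ} {Idb : Type} {arI : Idb → ℕ} {D : Type}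
    {P : List (GRule E arE m Idb arI)} {I : ∀ p : E, Set (Fin (arE p) → D)}
    {δ : Fin m → D} {T : Set (GFact Idb arI D)} (h : gstep P I δ T ⊆ T) :
    glfp P I δ ⊆ T :=
  Set.sInter_subset_of_mem h

theorem glfp_prefix {E : Type} {arE : E → ℕ} {m : ℕ} {Idb : Type} {arI : Idb → ℕ} {D : Type}
    (P : List (GRule E arE m Idb arI)) (I : ∀ p : E, Set (Fin (arE p) → D))
    (δ : Fin m → D) : gstep P I δ (glfp P I δ) ⊆ glfp P I δ := by
  intro f hf
  exact Set.mem_sInter.2 fun T hT => hT (gstep_mono P I δ (glfp_least hT) hf)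

section Conjunction

variable (E : Type) (arE : E → ℕ) (m N : ℕ) (hm : 0 < m)
variable (Ii : Fin N → Type) (arI : ∀ i, Ii i → ℕ)

/-- The combined IDB predicates: the (disjoint) IDB predicates of the programs
`P₁,…,P_N` together with fresh unary predicates `U₀,…,U_{N-1}`. -/
def IdbC : Type := (Σ i : Fin N, Ii i) ⊕ Fin N

/-- Arities of the combined IDB predicates. -/
def arC : IdbC N Ii → ℕ := Sum.elim (fun x => arI x.1 x.2) (fun _ => 1)

/-- The atom `Uₖ(λ₁)`. -/
def uAtom (k : Fin N) : GAtom E arE m (Option (IdbC N Ii)) (arO (arC N Ii arI)) :=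
  .i (some (Sum.inr k)) (fun _ => Sum.inr (⟨0, hm⟩ : Fin m))

/-- Renaming the atoms of program `Pᵢ` into the combined signature. -/
def mapAtom (i : Fin N) :
    GAtom E arE m (Option (Ii i)) (arO (arI i)) →
      GAtom E arE m (Option (IdbC N Ii)) (arO (arC N Ii arI))
  | .e p a => .e p a
  | .i none a => .i none a
  | .i (some q) a => .i (some (Sum.inl ⟨i, q⟩)) a

/-- The transformation of a rule of `Pᵢ`: (i) a rule `φ → hit` of `Pᵢ` with
`i < N-1` becomes `φ → Uᵢ(λ₁)` (the hit-rules of the last program are kept);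
(ii) the body of every IDB-free rule of `Pᵢ` with `i > 0` gets the extra atom
`U_{i-1}(λ₁)`; all other atoms are just renamed into the combined signature. -/
def transRule (i : Fin N) (r : GRule E arE m (Option (Ii i)) (arO (arI i))) :
    GRule E arE m (Option (IdbC N Ii)) (arO (arC N Ii arI)) :=
  let newBody : List (GAtom E arE m (Option (IdbC N Ii)) (arO (arC N Ii arI))) :=
    r.body.map (mapAtom E arE m N Ii arI i) ++
      (if 0 < i.val ∧ r.body.countP GAtom.isIDBb = 0 then
        [uAtom E arE m N hm Ii arI ⟨i.val - 1, Nat.lt_of_le_of_lt (Nat.sub_le _ _) i.isLt⟩]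
      else [])
  match r with
  | ⟨_, none, _⟩ =>
      if i.val = N - 1 then ⟨newBody, none, Fin.elim0⟩
      else ⟨newBody, some (Sum.inr i), fun _ => Sum.inr (⟨0, hm⟩ : Fin m)⟩
  | ⟨_, some q, hargs⟩ => ⟨newBody, some (Sum.inl ⟨i, q⟩), hargs⟩

/-- The transformed program: the union of the transformed rules of all the `Pᵢ`. -/
def transProg (Ps : ∀ i : Fin N, List (GRule E arE m (Option (Ii i)) (arO (arI i)))) :
    List (GRule E arE m (Option (IdbC N Ii)) (arO (arC N Ii arI))) :=
  (List.finRange N).flatMap fun i => (Ps i).map (transRule E arE m N hm Ii arI i)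


theorem transRule_body (i : Fin N) (r : GRule E arE m (Option (Ii i)) (arO (arI i))) :
    (transRule E arE m N hm Ii arI i r).body =
      r.body.map (mapAtom E arE m N Ii arI i) ++
        (if 0 < i.val ∧ r.body.countP GAtom.isIDBb = 0 then
          [uAtom E arE m N hm Ii arI ⟨i.val - 1, Nat.lt_of_le_of_lt (Nat.sub_le _ _) i.isLt⟩]
        else []) := by
  obtain ⟨body, hp, hargs⟩ := r
  cases hp with
  | none =>
    simp only [transRule]
    split <;> rfl
  | some q => rfl

theorem countP_mapAtom (i : Fin N) (l : List (GAtom E arE m (Option (Ii i)) (arO (arI i)))) :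
    (l.map (mapAtom E arE m N Ii arI i)).countP GAtom.isIDBb = l.countP GAtom.isIDBb := by
  rw [List.countP_map]
  congr 1
  funext a
  cases a with
  | e p args => rfl
  | i q args => cases q <;> rfl

/-- The invariant set used to prove soundness of the transformation. -/
def Sset (Ps : ∀ i : Fin N, List (GRule E arE m (Option (Ii i)) (arO (arI i))))
    {D : Type} (I : ∀ p : E, Set (Fin (arE p) → D)) (δ : Fin m → D) :
    Set (GFact (Option (IdbC N Ii)) (arO (arC N Ii arI)) D) :=
  fun f => match f with
  | ⟨none, _⟩ => ∀ j : Fin N, fcpExt (Ps j) I δ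
  | ⟨some (Sum.inl ⟨i, q⟩), v⟩ => (∀ j : Fin N, j.val < i.val → fcpExt (Ps j) I δ) ∧
      (⟨some q, v⟩ : GFact (Option (Ii i)) (arO (arI i)) D) ∈ glfp (Ps i) I δ
  | ⟨some (Sum.inr k), v⟩ => (∀ j : Fin N, j.val ≤ k.val → fcpExt (Ps j) I δ) ∧
      v = fun _ => δ ⟨0, hm⟩


theorem fin0_fun_eq {D : Type} (f g : Fin 0 → D) : f = g :=
  funext fun j => j.elim0

/-- Embedding of the facts of program `Pᵢ` into the combined signature; a `hit` fact of
`Pᵢ` becomes `Uᵢ(δ₁)` (or `hit` for the last program). -/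
def embFact {D : Type} (δ : Fin m → D) (i : Fin N) :
    GFact (Option (Ii i)) (arO (arI i)) D →
      GFact (Option (IdbC N Ii)) (arO (arC N Ii arI)) D
  | ⟨none, _⟩ =>
      if i.val = N - 1 then ⟨none, Fin.elim0⟩
      else ⟨some (Sum.inr i), fun _ => δ ⟨0, hm⟩⟩
  | ⟨some q, v⟩ => ⟨some (Sum.inl ⟨i, q⟩), v⟩

/-- Internalizing conjunctions of linear flag-and-check queries: for linear FCPs
`P₁,…,P_N` of the same arity `m` with disjoint IDB predicates and no `hit` atoms in
rule bodies, the transformed program has as many rules as all the `Pᵢ` together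
(only linear size increase), is again linear, and its extension over every database
instance is the intersection of the extensions of `P₁,…,P_N`. -/
theorem fcp_conjunction_internalization (hN : 0 < N)
    (Ps : ∀ i : Fin N, List (GRule E arE m (Option (Ii i)) (arO (arI i))))
    (hlin : ∀ i, ∀ r ∈ Ps i, r.body.countP GAtom.isIDBb ≤ 1)
    (hnohit : ∀ i, ∀ r ∈ Ps i, ∀ a ∈ r.body, ¬ a.isHit) :
    (transProg E arE m N hm Ii arI Ps).length = ∑ i : Fin N, (Ps i).length ∧
    (∀ r ∈ transProg E arE m N hm Ii arI Ps, r.body.countP GAtom.isIDBb ≤ 1) ∧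
    ∀ (D : Type) (I : ∀ p : E, Set (Fin (arE p) → D)) (δ : Fin m → D),
      (fcpExt (transProg E arE m N hm Ii arI Ps) I δ ↔ ∀ i : Fin N, fcpExt (Ps i) I δ) := by
  refine ⟨?_, ?_, ?_⟩
  · -- length
    simp only [transProg, List.length_flatMap, Fin.sum_univ_def]
    exact congrArg List.sum (List.map_congr_left fun i _ => by simp)
  · -- linearity
    intro r hr
    obtain ⟨i, -, hr⟩ := List.mem_flatMap.1 hr
    obtain ⟨r₀, hr₀, rfl⟩ := List.mem_map.1 hr
    rw [transRule_body, List.countP_append, countP_mapAtom]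
    split
    · next h =>
      rw [h.2]
      simp [uAtom, List.countP_cons, GAtom.isIDBb]
    · simpa using hlin i r₀ hr₀
  · intro D I δ
    set Q := transProg E arE m N hm Ii arI Ps with hQ
    -- the invariant set is closed under the transformed program
    have hstepS : gstep Q I δ (Sset E arE m N hm Ii arI Ps I δ)
        ⊆ Sset E arE m N hm Ii arI Ps I δ := by
      rintro f ⟨r', hr', σ, hb, rfl⟩
      obtain ⟨i, -, hr'⟩ := List.mem_flatMap.1 hr'
      obtain ⟨r₀, hr₀, rfl⟩ := List.mem_map.1 hr'
      obtain ⟨body, hp, hargs⟩ := r₀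
      rw [transRule_body] at hb
      have Hbody : ∀ a ∈ body, a.holds I (glfp (Ps i) I δ) σ δ := by
        intro a ha
        have h1 := hb _ (List.mem_append_left _ (List.mem_map_of_mem ha))
        cases a with
        | e p args => exact h1
        | i q args =>
          cases q with
          | none => exact absurd trivial (hnohit i _ hr₀ _ ha)
          | some q => exact h1.2
      have Hlt : ∀ j : Fin N, j.val < i.val → fcpExt (Ps j) I δ := by
        intro j hj
        by_cases hc : (body : List _).countP GAtom.isIDBb = 0
        · have hpos : 0 < i.val := Nat.lt_of_le_of_lt (Nat.zero_le _) hj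
          rw [if_pos ⟨hpos, hc⟩] at hb
          have h1 := hb _ (List.mem_append_right _ (List.mem_singleton_self _))
          exact h1.1 j (Nat.le_pred_of_lt hj)
        · obtain ⟨a, ha, hia⟩ : ∃ a ∈ body, GAtom.isIDBb a = true := by
            by_contra hcon
            push_neg at hcon
            exact hc (List.countP_eq_zero.2 (by simpa using hcon))
          have h1 := hb _ (List.mem_append_left _ (List.mem_map_of_mem ha))
          cases a with
          | e p args => simp [GAtom.isIDBb] at hia
          | i q args =>
            cases q with
            | none => exact absurd trivial (hnohit i _ hr₀ _ ha)
            | some q => exact h1.1 j hj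
      have Hhead : (⟨hp, fun j => Sum.elim σ δ (hargs j)⟩ :
          GFact (Option (Ii i)) (arO (arI i)) D) ∈ glfp (Ps i) I δ :=
        glfp_prefix _ _ _ ⟨⟨body, hp, hargs⟩, hr₀, σ, Hbody, rfl⟩
      cases hp with
      | some q => exact ⟨Hlt, Hhead⟩
      | none =>
        have hi : fcpExt (Ps i) I δ := ⟨_, Hhead⟩
        by_cases hiN : i.val = N - 1
        · simp only [transRule]
          rw [if_pos hiN]
          intro j
          rcases Nat.lt_or_ge j.val i.val with h | h
          · exact Hlt j h
          · have : j = i := Fin.ext (by omega)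
            exact this ▸ hi
        · simp only [transRule]
          rw [if_neg hiN]
          refine ⟨fun j hj => ?_, rfl⟩
          rcases Nat.lt_or_ge j.val i.val with h | h
          · exact Hlt j h
          · have : j = i := Fin.ext (by omega)
            exact this ▸ hi
    constructor
    · rintro ⟨f, hf⟩ j
      exact glfp_least hstepS hf j
    · intro hall
      have Ustep : ∀ i : Fin N,
          (0 < i.val →
            (⟨some (Sum.inr ⟨i.val - 1, Nat.lt_of_le_of_lt (Nat.sub_le _ _) i.isLt⟩),
              fun _ => δ ⟨0, hm⟩⟩ :
              GFact (Option (IdbC N Ii)) (arO (arC N Ii arI)) D) ∈ glfp Q I δ) →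
          glfp (Ps i) I δ ⊆ { f | embFact m N hm Ii arI δ i f ∈ glfp Q I δ } := by
        intro i hU
        apply glfp_least
        rintro f ⟨r, hr, σ, hbT, rfl⟩
        apply glfp_prefix
        refine ⟨transRule E arE m N hm Ii arI i r,
          List.mem_flatMap.2 ⟨i, List.mem_finRange i, List.mem_map_of_mem hr⟩, σ, ?_, ?_⟩
        · rw [transRule_body]
          intro a ha
          rcases List.mem_append.1 ha with ha | ha
          · obtain ⟨b, hb, rfl⟩ := List.mem_map.1 ha
            have h1 := hbT b hb
            cases b with
            | e p args => exact h1
            | i q args =>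
              cases q with
              | none => exact absurd trivial (hnohit i _ hr _ hb)
              | some q => exact h1
          · split at ha
            · next hcond =>
              rw [List.mem_singleton] at ha
              subst ha
              exact hU hcond.1
            · simp at ha
        · obtain ⟨body, hp, hargs⟩ := r
          cases hp with
          | some q => rfl
          | none =>
            by_cases hiN : i.val = N - 1
            · simp only [embFact, transRule]
              generalize instDecidableEqNat (↑i) (N - 1) = d
              rcases d with h | h
              · exact absurd hiN h
              exact congrArg
                (fun v => (⟨none, v⟩ : GFact (Option (IdbC N Ii)) (arO (arC N Ii arI)) D))
                (fin0_fun_eq _ _)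
            · simp only [embFact, transRule]
              generalize instDecidableEqNat (↑i) (N - 1) = d
              rcases d with h | h
              swap
              · exact absurd h hiN
              rfl
      have key : ∀ n : ℕ, ∀ hn : n < N, ∃ v,
          embFact m N hm Ii arI δ ⟨n, hn⟩
              (⟨none, v⟩ : GFact (Option (Ii ⟨n, hn⟩)) (arO (arI ⟨n, hn⟩)) D)
            ∈ glfp Q I δ := by
        intro n
        induction n using Nat.strong_induction_on with
        | _ n ih =>
          intro hn
          obtain ⟨f0, hf0⟩ := hall ⟨n, hn⟩
          refine ⟨f0, Ustep ⟨n, hn⟩ ?_ hf0⟩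
          intro hpos
          have hpos' : 0 < n := hpos
          have hn1 : n - 1 < N := by omega
          obtain ⟨v, h1⟩ := ih (n - 1) (by omega) hn1
          have hne : ¬ (n - 1 = N - 1) := by omega
          simp only [embFact] at h1
          generalize instDecidableEqNat (n - 1) (N - 1) = d at h1
          rcases d with h | h
          swap
          · exact absurd h hne
          exact h1
      obtain ⟨v, hfin⟩ := key (N - 1) (by omega)
      simp only [embFact] at hfin
      generalize instDecidableEqNat (N - 1) (N - 1) = d at hfin
      rcases d with h | h
      · exact absurd rfl h
      exact ⟨_, hfin⟩

end Conjunction
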